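/- For all integers r ≥ 2 and n ≥ 2, the probability of the event E_n (that the diagonal cyclic matching is weakly stable) satisfies P(E_n) ≥ ∫_{([0,1]^n)^r} ∏ (1 − x^{(1)}_{i_1} x^{(2)}_{i_2} ⋯ x^{(r)}_{i_r}) dx^{(1)} ⋯ dx^{(r)}, where the product is over all tuples (i_1,…,i_r) ∈ [n]^r with i_1 ≠ i_2, i_2 ≠ i_3, …, i_{r−1} ≠ i_r, i_r ≠ i_1. -/

import Mathlib

open MeasureTheory Set

noncomputable section

/-- Sample space for the cyclic model: `ω s i j = X^{(s)}_{i,j}`. -/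
abbrev CycSpace (r n : ℕ) := Fin r → Fin n → Fin n → ℝ

/-- The distribution of the scores: all `r·n²` entries i.i.d. uniform on `[0,1]`. -/
def cycMeasure (r n : ℕ) : Measure (CycSpace r n) :=
  Measure.pi fun _ : Fin r => Measure.pi fun _ : Fin n => Measure.pi fun _ : Fin n =>
    volume.restrict (Icc (0:ℝ) 1)

/-- The event `E_n`: there is no tuple `(i_1,…,i_r)` with cyclically consecutive entries
distinct such that `X^{(s)}_{i_s, i_{s+1}} < X^{(s)}_{i_s, i_s}` for every `s`;
i.e. the diagonal cyclic matching is weakly stable. -/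
def diagStable (r n : ℕ) (hr : 0 < r) (ω : CycSpace r n) : Prop :=
  haveI : NeZero r := ⟨hr.ne'⟩
  ¬ ∃ i : Fin r → Fin n, (∀ s : Fin r, i s ≠ i (s + 1)) ∧
      ∀ s : Fin r, ω s (i s) (i (s + 1)) < ω s (i s) (i s)

/-- The integrand `∏ (1 − x^{(1)}_{i_1} ⋯ x^{(r)}_{i_r})`, the product running over all tuples
`(i_1,…,i_r) ∈ [n]^r` with `i_1 ≠ i_2, …, i_{r−1} ≠ i_r, i_r ≠ i_1`. -/
def cycIntegrand (r n : ℕ) (hr : 0 < r) (x : Fin r → Fin n → ℝ) : ℝ :=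
  haveI : NeZero r := ⟨hr.ne'⟩
  ∏ i : Fin r → Fin n,
    if ∀ s : Fin r, i s ≠ i (s + 1) then 1 - ∏ s : Fin r, x s (i s) else 1

namespace CycAux


/-- Positive correlation of monotone `[0,1]`-valued functions. -/
def PosCorr {X : Type*} [MeasurableSpace X] [Preorder X] (μ : Measure X) : Prop :=
  ∀ f g : X → ℝ, Measurable f → Measurable g → Monotone f → Monotone g →
    (∀ x, f x ∈ Icc (0:ℝ) 1) → (∀ x, g x ∈ Icc (0:ℝ) 1) →
    (∫ x, f x ∂μ) * (∫ x, g x ∂μ) ≤ ∫ x, f x * g x ∂μ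

lemma integrable_of_Icc {X : Type*} [MeasurableSpace X] {μ : Measure X} [IsFiniteMeasure μ]
    {f : X → ℝ} (hf : Measurable f) (hb : ∀ x, f x ∈ Icc (0:ℝ) 1) : Integrable f μ := by
  refine (integrable_const (1:ℝ)).mono' hf.aestronglyMeasurable (ae_of_all _ fun x => ?_)
  rw [Real.norm_eq_abs, abs_le]
  exact ⟨by linarith [(hb x).1], (hb x).2⟩

lemma posCorr_of_linearOrder {X : Type*} [MeasurableSpace X] [LinearOrder X]
    (μ : Measure X) [IsProbabilityMeasure μ] : PosCorr μ := by
  intro f g hf hg mf mg bf bg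
  have hif : Integrable f μ := integrable_of_Icc hf bf
  have hig : Integrable g μ := integrable_of_Icc hg bg
  have hifg : Integrable (fun x => f x * g x) μ :=
    integrable_of_Icc (hf.mul hg) fun x =>
      ⟨mul_nonneg (bf x).1 (bg x).1, mul_le_one₀ (bf x).2 (bg x).1 (bg x).2⟩
  have key : 0 ≤ ∫ x, ∫ y, (f x - f y) * (g x - g y) ∂μ ∂μ := by
    refine integral_nonneg fun x => integral_nonneg fun y => ?_
    show (0:ℝ) ≤ (f x - f y) * (g x - g y)
    rcases le_total x y with h | h
    · nlinarith [mf h, mg h]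
    · nlinarith [mf h, mg h]
  have inner : ∀ x, (∫ y, (f x - f y) * (g x - g y) ∂μ)
      = f x * g x - f x * ∫ y, g y ∂μ - g x * ∫ y, f y ∂μ + ∫ y, f y * g y ∂μ := by
    intro x
    have h1 : Integrable (fun y => f x * g x - f x * g y) μ :=
      (integrable_const _).sub (hig.const_mul _)
    have h2 : Integrable (fun y => f y * g x) μ := hif.mul_const _
    have : (fun y => (f x - f y) * (g x - g y))
        = fun y => (f x * g x - f x * g y) - (f y * g x - f y * g y) := by
      funext y; ring
    have h5 : Integrable (fun y => f y * g x - f y * g y) μ := h2.sub hifg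
    have h6 : Integrable (fun y => f x * g y) μ := hig.const_mul _
    rw [this, integral_sub h1 h5, integral_sub (integrable_const _) h6,
      integral_sub h2 hifg, integral_const, integral_const_mul _ _]
    have : μ.real univ = 1 := by simp
    rw [integral_mul_const _ _, this]
    simp only [smul_eq_mul]; ring
  rw [integral_congr_ae (ae_of_all _ inner)] at key
  have h3 : Integrable (fun x => f x * g x - f x * ∫ y, g y ∂μ) μ :=
    hifg.sub (hif.mul_const _)
  have h4 : Integrable (fun x => g x * ∫ y, f y ∂μ) μ := hig.mul_const _
  have h7 : Integrable (fun x => f x * g x - f x * ∫ y, g y ∂μ - g x * ∫ y, f y ∂μ) μ := h3.sub h4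
  have h8 : Integrable (fun x => f x * ∫ y, g y ∂μ) μ := hif.mul_const _
  have expand : (∫ x, (f x * g x - f x * ∫ y, g y ∂μ - g x * ∫ y, f y ∂μ
      + ∫ y, f y * g y ∂μ) ∂μ)
      = 2 * (∫ x, f x * g x ∂μ) - 2 * ((∫ x, f x ∂μ) * (∫ x, g x ∂μ)) := by
    rw [integral_add h7 (integrable_const _), integral_sub h3 h4,
      integral_sub hifg h8, integral_mul_const _ _, integral_mul_const _ _,
      integral_const]
    have : μ.real univ = 1 := by simp
    rw [this]
    simp only [smul_eq_mul]; ring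
  rw [expand] at key
  linarith

/-- Transfer of `PosCorr` along a monotone measure-preserving measurable equivalence. -/
lemma PosCorr.of_measurableEquiv {X Y : Type*} [MeasurableSpace X] [MeasurableSpace Y]
    [Preorder X] [Preorder Y] {μ : Measure X} {ν : Measure Y} (e : X ≃ᵐ Y)
    (hmp : MeasurePreserving e μ ν) (hmono : Monotone e) (h : PosCorr μ) : PosCorr ν := by
  intro f g hf hg mf mg bf bg
  have h1 : ∀ F : Y → ℝ, (∫ y, F y ∂ν) = ∫ x, F (e x) ∂μ := fun F =>
    (hmp.integral_comp e.measurableEmbedding F).symm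
  rw [h1 f, h1 g, h1 (fun y => f y * g y)]
  exact h (f ∘ e) (g ∘ e) (hf.comp e.measurable) (hg.comp e.measurable)
    (mf.comp hmono) (mg.comp hmono) (fun x => bf _) (fun x => bg _)

lemma posCorr_prod {X Y : Type*} [MeasurableSpace X] [MeasurableSpace Y]
    [Preorder X] [Preorder Y] {μ : Measure X} {ν : Measure Y}
    [IsProbabilityMeasure μ] [IsProbabilityMeasure ν]
    (hX : PosCorr μ) (hY : PosCorr ν) : PosCorr (μ.prod ν) := by
  intro f g hf hg mf mg bf bg
  set F : X → ℝ := fun x => ∫ y, f (x, y) ∂ν with hF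
  set G : X → ℝ := fun x => ∫ y, g (x, y) ∂ν with hG
  have hsliceF : ∀ x : X, Measurable fun y => f (x, y) :=
    fun x => hf.comp measurable_prodMk_left
  have hsliceG : ∀ x : X, Measurable fun y => g (x, y) :=
    fun x => hg.comp measurable_prodMk_left
  have hFm : Measurable F := (hf.stronglyMeasurable.integral_prod_right').measurable
  have hGm : Measurable G := (hg.stronglyMeasurable.integral_prod_right').measurable
  have hFmono : Monotone F := by
    intro x x' hxx'
    exact integral_mono (integrable_of_Icc (hsliceF x) fun y => bf _)
      (integrable_of_Icc (hsliceF x') fun y => bf _)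
      (fun y => mf (Prod.mk_le_mk.2 ⟨hxx', le_rfl⟩))
  have hGmono : Monotone G := by
    intro x x' hxx'
    exact integral_mono (integrable_of_Icc (hsliceG x) fun y => bg _)
      (integrable_of_Icc (hsliceG x') fun y => bg _)
      (fun y => mg (Prod.mk_le_mk.2 ⟨hxx', le_rfl⟩))
  have hFb : ∀ x, F x ∈ Icc (0:ℝ) 1 := by
    intro x
    refine ⟨integral_nonneg fun y => (bf _).1, ?_⟩
    have h : (∫ y, f (x, y) ∂ν) ≤ ∫ _, (1:ℝ) ∂ν :=
      integral_mono (integrable_of_Icc (hsliceF x) fun y => bf _)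
      (integrable_const (1:ℝ)) (fun y => (bf (x, y)).2)
    simpa using h
  have hGb : ∀ x, G x ∈ Icc (0:ℝ) 1 := by
    intro x
    refine ⟨integral_nonneg fun y => (bg _).1, ?_⟩
    have h : (∫ y, g (x, y) ∂ν) ≤ ∫ _, (1:ℝ) ∂ν :=
      integral_mono (integrable_of_Icc (hsliceG x) fun y => bg _)
      (integrable_const (1:ℝ)) (fun y => (bg (x, y)).2)
    simpa using h
  have hintf : Integrable f (μ.prod ν) := integrable_of_Icc hf bf
  have hintg : Integrable g (μ.prod ν) := integrable_of_Icc hg bg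
  have hintfg : Integrable (fun z => f z * g z) (μ.prod ν) :=
    integrable_of_Icc (hf.mul hg) fun z =>
      ⟨mul_nonneg (bf z).1 (bg z).1, mul_le_one₀ (bf z).2 (bg z).1 (bg z).2⟩
  rw [integral_prod f hintf, integral_prod g hintg, integral_prod _ hintfg]
  calc (∫ x, F x ∂μ) * ∫ x, G x ∂μ
      ≤ ∫ x, F x * G x ∂μ := hX F G hFm hGm hFmono hGmono hFb hGb
    _ ≤ ∫ x, ∫ y, f (x, y) * g (x, y) ∂ν ∂μ := by
        refine integral_mono (integrable_of_Icc (hFm.mul hGm) fun x =>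
          ⟨mul_nonneg (hFb x).1 (hGb x).1, mul_le_one₀ (hFb x).2 (hGb x).1 (hGb x).2⟩)
          ?_ ?_
        · refine integrable_of_Icc
            (((hf.mul hg).stronglyMeasurable.integral_prod_right').measurable) fun x => ?_
          refine ⟨integral_nonneg fun y => mul_nonneg (bf _).1 (bg _).1, ?_⟩
          have h : (∫ y, f (x,y) * g (x,y) ∂ν) ≤ ∫ _, (1:ℝ) ∂ν := integral_mono
            (integrable_of_Icc ((hsliceF x).mul (hsliceG x)) fun y =>
              ⟨mul_nonneg (bf _).1 (bg _).1, mul_le_one₀ (bf _).2 (bg _).1 (bg _).2⟩)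
            (integrable_const (1:ℝ))
            (fun y => mul_le_one₀ (bf (x,y)).2 (bg (x,y)).1 (bg (x,y)).2)
          simpa using h
        · intro x
          exact hY (fun y => f (x,y)) (fun y => g (x,y)) (hsliceF x) (hsliceG x)
            (fun y y' h => mf (Prod.mk_le_mk.2 ⟨le_rfl, h⟩))
            (fun y y' h => mg (Prod.mk_le_mk.2 ⟨le_rfl, h⟩))
            (fun y => bf _) (fun y => bg _)



lemma posCorr_pi_fin : ∀ (k : ℕ) (X : Fin k → Type) (_ : ∀ i, MeasurableSpace (X i))
    (_ : ∀ i, Preorder (X i)) (μ : ∀ i, Measure (X i)) (_ : ∀ i, IsProbabilityMeasure (μ i)),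
    (∀ i, PosCorr (μ i)) → PosCorr (Measure.pi μ) := by
  intro k
  induction k with
  | zero =>
    intro X _ _ μ _ _
    intro f g hf hg mf mg bf bg
    rw [Measure.pi_of_empty]
    rw [integral_dirac' f _ hf.stronglyMeasurable, integral_dirac' g _ hg.stronglyMeasurable,
      integral_dirac' (fun x => f x * g x) _ (hf.mul hg).stronglyMeasurable]
  | succ k IH =>
    intro X _ _ μ hprob hpc
    have e := MeasurableEquiv.piFinSuccAbove X 0
    have mp : MeasurePreserving (MeasurableEquiv.piFinSuccAbove X 0).symm
        ((μ 0).prod (Measure.pi fun j => μ ((0 : Fin (k+1)).succAbove j)))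
        (Measure.pi μ) :=
      (measurePreserving_piFinSuccAbove μ 0).symm _
    have hpcProd : PosCorr ((μ 0).prod (Measure.pi fun j => μ ((0 : Fin (k+1)).succAbove j))) :=
      posCorr_prod (hpc 0)
        (IH (fun j => X ((0 : Fin (k+1)).succAbove j)) _ _ _ (fun j => hprob _)
          (fun j => hpc _))
    refine PosCorr.of_measurableEquiv (MeasurableEquiv.piFinSuccAbove X 0).symm mp ?_ hpcProd
    rintro ⟨x, p⟩ ⟨x', p'⟩ ⟨hx, hp⟩ b
    simp only [MeasurableEquiv.piFinSuccAbove_symm_apply, Fin.insertNthEquiv,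
      Equiv.coe_fn_mk]
    rcases eq_or_ne b 0 with rfl | hb
    · simpa only [Fin.insertNth_apply_same] using hx
    · obtain ⟨j, rfl⟩ := Fin.exists_succAbove_eq hb
      simpa only [Fin.insertNth_apply_succAbove] using hp j

lemma posCorr_pi {ι : Type} [Fintype ι] (X : ι → Type) [∀ i, MeasurableSpace (X i)]
    [∀ i, Preorder (X i)] (μ : ∀ i, Measure (X i)) [∀ i, IsProbabilityMeasure (μ i)]
    (hpc : ∀ i, PosCorr (μ i)) : PosCorr (Measure.pi μ) := by
  have e : Fin (Fintype.card ι) ≃ ι := (Fintype.equivFin ι).symm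
  have mp : MeasurePreserving (MeasurableEquiv.piCongrLeft X e)
      (Measure.pi fun i => μ (e i)) (Measure.pi μ) :=
    measurePreserving_piCongrLeft μ e
  refine PosCorr.of_measurableEquiv (MeasurableEquiv.piCongrLeft X e) mp ?_
    (posCorr_pi_fin _ (fun i => X (e i)) _ _ _ (fun i => inferInstance) (fun i => hpc _))
  intro x y hxy b
  obtain ⟨a, rfl⟩ : ∃ a, e a = b := ⟨e.symm b, e.apply_symm_apply b⟩
  rw [MeasurableEquiv.piCongrLeft_apply_apply, MeasurableEquiv.piCongrLeft_apply_apply]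
  exact hxy a

lemma PosCorr.finset_prod {X : Type*} [MeasurableSpace X] [Preorder X] {μ : Measure X}
    [IsProbabilityMeasure μ] (hμ : PosCorr μ) {I : Type*} (f : I → X → ℝ) (S : Finset I)
    (hmeas : ∀ i, Measurable (f i)) (hmono : ∀ i, Monotone (f i))
    (hb : ∀ i x, f i x ∈ Icc (0:ℝ) 1) :
    (∏ i ∈ S, ∫ x, f i x ∂μ) ≤ ∫ x, ∏ i ∈ S, f i x ∂μ := by
  classical
  induction S using Finset.induction_on with
  | empty => simp
  | @insert i S hiS IH =>
    have hPm : Measurable fun x => ∏ j ∈ S, f j x :=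
      Finset.measurable_prod _ fun j _ => hmeas j
    have hPmono : Monotone fun x => ∏ j ∈ S, f j x := by
      intro x y hxy
      exact Finset.prod_le_prod (fun j _ => (hb j x).1) (fun j _ => hmono j hxy)
    have hPb : ∀ x, (∏ j ∈ S, f j x) ∈ Icc (0:ℝ) 1 := fun x =>
      ⟨Finset.prod_nonneg fun j _ => (hb j x).1,
        Finset.prod_le_one (fun j _ => (hb j x).1) (fun j _ => (hb j x).2)⟩
    rw [Finset.prod_insert hiS]
    have step1 : (∫ x, f i x ∂μ) * ∏ j ∈ S, ∫ x, f j x ∂μ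
        ≤ (∫ x, f i x ∂μ) * ∫ x, ∏ j ∈ S, f j x ∂μ :=
      mul_le_mul_of_nonneg_left IH (integral_nonneg fun x => (hb i x).1)
    have step2 : (∫ x, f i x ∂μ) * ∫ x, ∏ j ∈ S, f j x ∂μ
        ≤ ∫ x, f i x * ∏ j ∈ S, f j x ∂μ :=
      hμ (f i) _ (hmeas i) hPm (hmono i) hPmono (hb i) hPb
    calc (∫ x, f i x ∂μ) * ∏ j ∈ S, ∫ x, f j x ∂μ
        ≤ ∫ x, f i x * ∏ j ∈ S, f j x ∂μ := le_trans step1 step2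
      _ = ∫ x, ∏ j ∈ insert i S, f j x ∂μ := by
          congr 1; funext x; rw [Finset.prod_insert hiS]


/-- The uniform distribution on `[0,1]`. -/
def unif : Measure ℝ := volume.restrict (Icc (0:ℝ) 1)

instance : IsProbabilityMeasure unif :=
  ⟨by simp [unif, Real.volume_Icc]⟩

/-- Splitting off the diagonal of a matrix, row by row. -/
def matE (m : ℕ) : (Fin (m+1) → Fin (m+1) → ℝ) ≃ᵐ (Fin (m+1) → ℝ) × (Fin (m+1) → Fin m → ℝ) :=
  (MeasurableEquiv.piCongrRight fun i =>
      MeasurableEquiv.piFinSuccAbove (fun _ : Fin (m+1) => ℝ) i).trans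
    (MeasurableEquiv.arrowProdEquivProdArrow ℝ (Fin m → ℝ) (Fin (m+1)))

/-- Splitting a cyclic sample into diagonal and off-diagonal parts. -/
def Psi (r m : ℕ) : CycSpace r (m+1) ≃ᵐ
    (Fin r → Fin (m+1) → ℝ) × (Fin r → Fin (m+1) → Fin m → ℝ) :=
  (MeasurableEquiv.piCongrRight fun _ : Fin r => matE m).trans
    (MeasurableEquiv.arrowProdEquivProdArrow _ _ (Fin r))

def nuA (r m : ℕ) : Measure (Fin r → Fin (m+1) → ℝ) :=
  Measure.pi fun _ => Measure.pi fun _ => unif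

def muB (r m : ℕ) : Measure (Fin r → Fin (m+1) → Fin m → ℝ) :=
  Measure.pi fun _ => Measure.pi fun _ => Measure.pi fun _ => unif

instance (m : ℕ) : IsProbabilityMeasure (Measure.pi fun _ : Fin m => unif) :=
  inferInstance

instance (m : ℕ) : SigmaFinite (Measure.pi fun _ : Fin m => unif) :=
  inferInstance

instance (k m : ℕ) :
    IsProbabilityMeasure (Measure.pi fun _ : Fin k => Measure.pi fun _ : Fin m => unif) :=
  inferInstance

instance (k m : ℕ) :
    SigmaFinite (Measure.pi fun _ : Fin k => Measure.pi fun _ : Fin m => unif) :=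
  inferInstance

instance (r k m : ℕ) : IsProbabilityMeasure
    (Measure.pi fun _ : Fin r => Measure.pi fun _ : Fin k => Measure.pi fun _ : Fin m => unif) :=
  inferInstance

instance (r m : ℕ) : IsProbabilityMeasure (nuA r m) := by
  unfold nuA; infer_instance

instance (r m : ℕ) : IsProbabilityMeasure (muB r m) := by
  unfold muB; infer_instance

lemma psi_symm_apply (r m : ℕ) (d : Fin r → Fin (m+1) → ℝ)
    (u : Fin r → Fin (m+1) → Fin m → ℝ) (s : Fin r) (a : Fin (m+1)) (b : Fin (m+1)) :
    (Psi r m).symm (d, u) s a b = Fin.insertNth (α := fun _ => ℝ) a (d s a) (u s a) b := rfl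

lemma mpPsi (r m : ℕ) :
    MeasurePreserving (Psi r m) (cycMeasure r (m+1)) ((nuA r m).prod (muB r m)) := by
  have h1 : ∀ i : Fin (m+1),
      MeasurePreserving (MeasurableEquiv.piFinSuccAbove (fun _ : Fin (m+1) => ℝ) i)
        (Measure.pi fun _ : Fin (m+1) => unif)
        (unif.prod (Measure.pi fun _ : Fin m => unif)) := fun i =>
    measurePreserving_piFinSuccAbove (fun _ => unif) i
  have h2 : MeasurePreserving (matE m)
      (Measure.pi fun _ : Fin (m+1) => Measure.pi fun _ : Fin (m+1) => unif)
      ((Measure.pi fun _ : Fin (m+1) => unif).prod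
        (Measure.pi fun _ : Fin (m+1) => Measure.pi fun _ : Fin m => unif)) :=
    (measurePreserving_arrowProdEquivProdArrow ℝ (Fin m → ℝ) (Fin (m+1))
        (fun _ => unif) (fun _ => Measure.pi fun _ => unif)).comp
      (measurePreserving_pi _ _ h1)
  exact (measurePreserving_arrowProdEquivProdArrow _ _ (Fin r)
      (fun _ => Measure.pi fun _ : Fin (m+1) => unif)
      (fun _ => Measure.pi fun _ : Fin (m+1) => Measure.pi fun _ : Fin m => unif)).comp
    (measurePreserving_pi _ _ (fun _ => h2))

variable {r n : ℕ} [NeZero r]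

/-- The indicator of the stability event, written as a product over tuples. -/
def Hfun (r n : ℕ) [NeZero r] : CycSpace r n → ℝ := fun ω =>
  ∏ t : Fin r → Fin n,
    if (∀ s : Fin r, t s ≠ t (s + 1)) ∧
        (∀ s : Fin r, ω s (t s) (t (s + 1)) < ω s (t s) (t s)) then 0 else 1

lemma hev (s : Fin r) (a b : Fin n) : Measurable fun ω : CycSpace r n => ω s a b :=
  (measurable_pi_apply b).comp ((measurable_pi_apply a).comp (measurable_pi_apply s))

lemma measurableSet_cond (t : Fin r → Fin n) :
    MeasurableSet {ω : CycSpace r n | (∀ s : Fin r, t s ≠ t (s + 1)) ∧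
      (∀ s : Fin r, ω s (t s) (t (s + 1)) < ω s (t s) (t s))} := by
  rw [setOf_and]
  refine (MeasurableSet.const _).inter ?_
  rw [setOf_forall]
  exact MeasurableSet.iInter fun s => measurableSet_lt (hev _ _ _) (hev _ _ _)

lemma Hfun_measurable : Measurable (Hfun r n) := by
  refine Finset.measurable_prod _ fun t _ => ?_
  exact Measurable.ite (measurableSet_cond t) measurable_const measurable_const

lemma Hfun_mem (ω : CycSpace r n) : Hfun r n ω ∈ Icc (0:ℝ) 1 := by
  constructor
  · exact Finset.prod_nonneg fun t _ => by split_ifs <;> norm_num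
  · exact Finset.prod_le_one (fun t _ => by split_ifs <;> norm_num)
      (fun t _ => by split_ifs <;> norm_num)

lemma Hfun_eq_indicator (hr : 0 < r) :
    Hfun r n = Set.indicator {ω : CycSpace r n | diagStable r n hr ω} 1 := by
  funext ω
  by_cases h : diagStable r n hr ω
  · rw [Set.indicator_of_mem (show ω ∈ {ω : CycSpace r n | diagStable r n hr ω} from h),
      Pi.one_apply]
    refine Finset.prod_eq_one fun t _ => if_neg fun hc => ?_
    exact h ⟨t, hc.1, hc.2⟩
  · rw [Set.indicator_of_notMem (show ω ∉ {ω : CycSpace r n | diagStable r n hr ω} from h)]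
    simp only [diagStable, not_not] at h
    obtain ⟨t, h1, h2⟩ := h
    exact Finset.prod_eq_zero (Finset.mem_univ t) (if_pos ⟨h1, h2⟩)

lemma measurableSet_stable (hr : 0 < r) :
    MeasurableSet {ω : CycSpace r n | diagStable r n hr ω} := by
  have : {ω : CycSpace r n | diagStable r n hr ω} =
      ⋂ t : Fin r → Fin n, ({ω : CycSpace r n | (∀ s : Fin r, t s ≠ t (s + 1)) ∧
        (∀ s : Fin r, ω s (t s) (t (s + 1)) < ω s (t s) (t s))})ᶜ := by
    ext ω
    simp only [diagStable, mem_setOf_eq, mem_iInter, mem_compl_iff, not_exists]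
  rw [this]
  exact MeasurableSet.iInter fun t => (measurableSet_cond t).compl

lemma unif_Iio {c : ℝ} (hc : c ∈ Icc (0:ℝ) 1) : unif (Iio c) = ENNReal.ofReal c := by
  rw [unif, Measure.restrict_apply measurableSet_Iio]
  have : Iio c ∩ Icc (0:ℝ) 1 = Ico 0 c := by
    ext x
    simp only [mem_inter_iff, mem_Iio, mem_Icc, mem_Ico]
    constructor
    · rintro ⟨h1, h2, _⟩; exact ⟨h2, h1⟩
    · rintro ⟨h1, h2⟩; exact ⟨h2, h1, le_of_lt (lt_of_lt_of_le h2 hc.2)⟩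
  rw [this, Real.volume_Ico, sub_zero]

lemma key_lemma (r m : ℕ) [NeZero r] (hr : 0 < r) (d : Fin r → Fin (m+1) → ℝ)
    (hd : ∀ s a, d s a ∈ Icc (0:ℝ) 1) :
    cycIntegrand r (m+1) hr d ≤
      ∫ u, Hfun r (m+1) ((Psi r m).symm (d, u)) ∂(muB r m) := by
  set B := Fin r → Fin (m+1) → Fin m → ℝ with hB
  set fT : (Fin r → Fin (m+1)) → B → ℝ := fun t u =>
    if (∀ s : Fin r, t s ≠ t (s + 1)) ∧
        (∀ s : Fin r, Fin.insertNth (α := fun _ => ℝ) (t s) (d s (t s)) (u s (t s)) (t (s + 1)) < d s (t s))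
      then 0 else 1 with hfT
  have hevB : ∀ (s : Fin r) (a : Fin (m+1)) (j : Fin m),
      Measurable fun u : B => u s a j := fun s a j =>
    (measurable_pi_apply j).comp ((measurable_pi_apply a).comp (measurable_pi_apply s))
  -- rewrite the integrand as a product of the `fT`
  have step0 : (fun u : B => Hfun r (m+1) ((Psi r m).symm (d, u))) = fun u => ∏ t, fT t u := by
    funext u
    refine Finset.prod_congr rfl fun t _ => ?_
    simp only [psi_symm_apply, Fin.insertNth_apply_same]
    rfl
  -- measurability of the insertNth coordinate reads
  have hins : ∀ (t : Fin r → Fin (m+1)) (s : Fin r),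
      Measurable fun u : B =>
        Fin.insertNth (α := fun _ => ℝ) (t s) (d s (t s)) (u s (t s)) (t (s + 1)) := by
    intro t s
    rcases eq_or_ne (t (s+1)) (t s) with he | he
    · simp only [he, Fin.insertNth_apply_same]
      exact measurable_const
    · obtain ⟨j, hj⟩ := Fin.exists_succAbove_eq he
      have : (fun u : B => Fin.insertNth (α := fun _ => ℝ) (t s) (d s (t s)) (u s (t s)) (t (s + 1)))
          = fun u => u s (t s) j := by
        funext u; rw [← hj, Fin.insertNth_apply_succAbove]
      rw [this]; exact hevB s (t s) j
  have hmeasT : ∀ t, Measurable (fT t) := by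
    intro t
    refine Measurable.ite ?_ measurable_const measurable_const
    rw [setOf_and]
    refine (MeasurableSet.const _).inter ?_
    rw [setOf_forall]
    exact MeasurableSet.iInter fun s => measurableSet_lt (hins t s) measurable_const
  have hmonoT : ∀ t, Monotone (fT t) := by
    intro t u u' huu'
    by_cases hc' : (∀ s : Fin r, t s ≠ t (s + 1)) ∧
        (∀ s : Fin r, Fin.insertNth (α := fun _ => ℝ) (t s) (d s (t s)) (u' s (t s)) (t (s + 1)) < d s (t s))
    · have hle : ∀ s : Fin r,
          Fin.insertNth (α := fun _ => ℝ) (t s) (d s (t s)) (u s (t s)) (t (s + 1)) ≤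
          Fin.insertNth (α := fun _ => ℝ) (t s) (d s (t s)) (u' s (t s)) (t (s + 1)) := by
        intro s
        rcases eq_or_ne (t (s+1)) (t s) with he | he
        · rw [he, Fin.insertNth_apply_same, Fin.insertNth_apply_same]
        · obtain ⟨j, hj⟩ := Fin.exists_succAbove_eq he
          rw [← hj, Fin.insertNth_apply_succAbove, Fin.insertNth_apply_succAbove]
          exact huu' s (t s) j
      have h0 : fT t u = 0 := if_pos ⟨hc'.1, fun s => lt_of_le_of_lt (hle s) (hc'.2 s)⟩
      have h0' : fT t u' = 0 := if_pos hc'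
      rw [h0, h0']
    · have h1 : fT t u' = 1 := if_neg hc'
      rw [h1]
      simp only [hfT]
      split_ifs <;> norm_num
  have hbT : ∀ t (u : B), fT t u ∈ Icc (0:ℝ) 1 := by
    intro t u
    simp only [hfT]
    split_ifs <;> norm_num
  have hPC : PosCorr (muB r m) := by
    refine posCorr_pi _ _ fun s => posCorr_pi _ _ fun a => posCorr_pi _ _ fun j => ?_
    exact posCorr_of_linearOrder unif
  -- the value of the single-tuple integral
  have hint : ∀ t : Fin r → Fin (m+1), (∫ u, fT t u ∂(muB r m))
      = if ∀ s : Fin r, t s ≠ t (s + 1) then 1 - ∏ s : Fin r, d s (t s) else 1 := by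
    intro t
    by_cases hadm : ∀ s : Fin r, t s ≠ t (s + 1)
    · rw [if_pos hadm]
      have hex : ∀ s : Fin r, ∃ j : Fin m, (t s).succAbove j = t (s + 1) := fun s =>
        Fin.exists_succAbove_eq (hadm s).symm
      choose j hj using hex
      set S : Set B := {u : B | ∀ s : Fin r, u s (t s) (j s) < d s (t s)} with hS
      have hSmeas : MeasurableSet S := by
        rw [hS, setOf_forall]
        exact MeasurableSet.iInter fun s => measurableSet_lt (hevB s (t s) (j s)) measurable_const
      have hft : fT t = fun u => 1 - S.indicator (fun _ => (1:ℝ)) u := by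
        funext u
        simp only [hfT]
        by_cases hc : u ∈ S
        · have hcond : (∀ s : Fin r, t s ≠ t (s + 1)) ∧ (∀ s : Fin r,
              Fin.insertNth (α := fun _ => ℝ) (t s) (d s (t s)) (u s (t s)) (t (s + 1))
                < d s (t s)) :=
            ⟨hadm, fun s => by rw [← hj s, Fin.insertNth_apply_succAbove]; exact hc s⟩
          rw [Set.indicator_of_mem hc, if_pos hcond]
          norm_num
        · rw [Set.indicator_of_notMem hc, if_neg]
          · norm_num
          · rintro ⟨-, h2⟩
            refine hc fun s => ?_
            have := h2 s
            rwa [← hj s, Fin.insertNth_apply_succAbove] at this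
      have hμS : muB r m S = ∏ s : Fin r, ENNReal.ofReal (d s (t s)) := by
        have e1 : S = Set.pi univ fun s : Fin r =>
            {v : Fin (m+1) → Fin m → ℝ | v (t s) (j s) < d s (t s)} := by
          ext u
          constructor
          · exact fun h s _ => h s
          · exact fun h s => h s (mem_univ s)
        rw [e1, muB, Measure.pi_pi]
        refine Finset.prod_congr rfl fun s _ => ?_
        have e2 : {v : Fin (m+1) → Fin m → ℝ | v (t s) (j s) < d s (t s)}
            = Set.pi univ fun a : Fin (m+1) =>
                if a = t s then {w : Fin m → ℝ | w (j s) < d s (t s)} else univ := by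
          ext v
          simp only [mem_setOf_eq, Set.mem_pi, mem_univ, forall_true_left]
          constructor
          · intro hv a
            by_cases ha : a = t s
            · subst ha; simp [hv]
            · simp [ha]
          · intro hv
            have := hv (t s)
            simpa using this
        rw [e2, Measure.pi_pi]
        have e3 : ∀ a : Fin (m+1),
            (Measure.pi fun _ : Fin m => unif)
              (if a = t s then {w : Fin m → ℝ | w (j s) < d s (t s)} else univ)
            = if a = t s
                then (Measure.pi fun _ : Fin m => unif) {w : Fin m → ℝ | w (j s) < d s (t s)}
                else 1 := by
          intro a; split_ifs <;> simp
        rw [Finset.prod_congr rfl fun a _ => e3 a, Finset.prod_ite_eq' Finset.univ (t s)]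
        simp only [Finset.mem_univ, if_true]
        have e4 : {w : Fin m → ℝ | w (j s) < d s (t s)}
            = Set.pi univ fun b : Fin m => if b = j s then Iio (d s (t s)) else univ := by
          ext w
          simp only [mem_setOf_eq, Set.mem_pi, mem_univ, forall_true_left]
          constructor
          · intro hw b
            by_cases hb : b = j s
            · subst hb; simpa using hw
            · simp [hb]
          · intro hw
            have := hw (j s)
            simpa using this
        rw [e4, Measure.pi_pi]
        have e5 : ∀ b : Fin m,
            unif (if b = j s then Iio (d s (t s)) else univ)
            = if b = j s then unif (Iio (d s (t s))) else 1 := by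
          intro b; split_ifs <;> simp
        rw [Finset.prod_congr rfl fun b _ => e5 b, Finset.prod_ite_eq' Finset.univ (j s)]
        simp only [Finset.mem_univ, if_true]
        exact unif_Iio (hd s (t s))
      rw [hft, integral_sub (integrable_const _) ((integrable_const _).indicator hSmeas),
        integral_const, integral_indicator_const (1:ℝ) hSmeas, measureReal_def, measureReal_def, hμS]
      have : (muB r m univ).toReal = 1 := by simp
      rw [this]
      rw [ENNReal.toReal_prod]
      have : ∀ s : Fin r, (ENNReal.ofReal (d s (t s))).toReal = d s (t s) := fun s =>
        ENNReal.toReal_ofReal (hd s (t s)).1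
      rw [Finset.prod_congr rfl fun s _ => this s]
      simp
    · rw [if_neg hadm]
      have : fT t = fun _ => 1 := funext fun u => if_neg fun hc => hadm hc.1
      rw [this, integral_const]
      simp
  calc cycIntegrand r (m+1) hr d
      = ∏ t : Fin r → Fin (m+1), ∫ u, fT t u ∂(muB r m) := by
        rw [cycIntegrand]
        exact Finset.prod_congr rfl fun t _ => (hint t).symm
    _ ≤ ∫ u, ∏ t : Fin r → Fin (m+1), fT t u ∂(muB r m) :=
        hPC.finset_prod fT Finset.univ hmeasT hmonoT hbT
    _ = ∫ u, Hfun r (m+1) ((Psi r m).symm (d, u)) ∂(muB r m) := by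
        rw [step0]

theorem aux_main (r m : ℕ) (hr : 0 < r) :
    (∫ x : Fin r → Fin (m+1) → ℝ, cycIntegrand r (m+1) hr x
        ∂(Measure.pi fun _ : Fin r => Measure.pi fun _ : Fin (m+1) =>
            volume.restrict (Icc (0:ℝ) 1))) ≤
      (cycMeasure r (m+1) {ω | diagStable r (m+1) hr ω}).toReal := by
  haveI : NeZero r := ⟨hr.ne'⟩
  set K : (Fin r → Fin (m+1) → ℝ) × (Fin r → Fin (m+1) → Fin m → ℝ) → ℝ :=
    fun p => Hfun r (m+1) ((Psi r m).symm p) with hK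
  have hKmeas : Measurable K := Hfun_measurable.comp (Psi r m).symm.measurable
  have hKb : ∀ p, K p ∈ Icc (0:ℝ) 1 := fun p => Hfun_mem _
  have hKint : Integrable K ((nuA r m).prod (muB r m)) := integrable_of_Icc hKmeas hKb
  have hmeasure_eq : (Measure.pi fun _ : Fin r => Measure.pi fun _ : Fin (m+1) =>
      volume.restrict (Icc (0:ℝ) 1)) = nuA r m := rfl
  rw [hmeasure_eq]
  have hae : ∀ᵐ d ∂(nuA r m), ∀ (s : Fin r) (a : Fin (m+1)), d s a ∈ Icc (0:ℝ) 1 := by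
    refine ae_all_iff.2 fun s => ae_all_iff.2 fun a => ?_
    have hu : ∀ᵐ x ∂unif, x ∈ Icc (0:ℝ) 1 := ae_restrict_mem measurableSet_Icc
    have hrow : ∀ᵐ v ∂(Measure.pi fun _ : Fin (m+1) => unif), v a ∈ Icc (0:ℝ) 1 :=
      (Measure.tendsto_eval_ae_ae (μ := fun _ : Fin (m+1) => unif) (i := a)).eventually hu
    show ∀ᵐ d ∂(Measure.pi fun _ : Fin r => Measure.pi fun _ : Fin (m+1) => unif),
      d s a ∈ Icc (0:ℝ) 1
    exact (Measure.tendsto_eval_ae_ae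
      (μ := fun _ : Fin r => Measure.pi fun _ : Fin (m+1) => unif) (i := s)).eventually hrow
  have hcyc_eq : (fun d : Fin r → Fin (m+1) → ℝ => cycIntegrand r (m+1) hr d)
      = fun d => ∏ t : Fin r → Fin (m+1),
          if ∀ s : Fin r, t s ≠ t (s + 1) then 1 - ∏ s : Fin r, d s (t s) else 1 := rfl
  have hcycmeas : Measurable (fun d : Fin r → Fin (m+1) → ℝ => cycIntegrand r (m+1) hr d) := by
    rw [hcyc_eq]
    refine Finset.measurable_prod _ fun t _ => ?_
    refine Measurable.ite (MeasurableSet.const _) ?_ measurable_const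
    exact measurable_const.sub (Finset.measurable_prod _ fun s _ =>
      (measurable_pi_apply (t s)).comp (measurable_pi_apply s))
  have hcycbound : ∀ d : Fin r → Fin (m+1) → ℝ,
      (∀ (s : Fin r) (a : Fin (m+1)), d s a ∈ Icc (0:ℝ) 1) →
      cycIntegrand r (m+1) hr d ∈ Icc (0:ℝ) 1 := by
    intro d hd
    have hfac : ∀ t : Fin r → Fin (m+1),
        (if ∀ s : Fin r, t s ≠ t (s + 1) then 1 - ∏ s : Fin r, d s (t s) else 1)
          ∈ Icc (0:ℝ) 1 := by
      intro t
      split_ifs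
      · have h1 : (0:ℝ) ≤ ∏ s : Fin r, d s (t s) :=
          Finset.prod_nonneg fun s _ => (hd s _).1
        have h2 : (∏ s : Fin r, d s (t s)) ≤ 1 :=
          Finset.prod_le_one (fun s _ => (hd s _).1) (fun s _ => (hd s _).2)
        exact ⟨by linarith, by linarith⟩
      · exact ⟨zero_le_one, le_refl 1⟩
    have : cycIntegrand r (m+1) hr d = ∏ t : Fin r → Fin (m+1),
        (if ∀ s : Fin r, t s ≠ t (s + 1) then 1 - ∏ s : Fin r, d s (t s) else 1) := rfl
    rw [this]
    exact ⟨Finset.prod_nonneg fun t _ => (hfac t).1,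
      Finset.prod_le_one (fun t _ => (hfac t).1) (fun t _ => (hfac t).2)⟩
  have hint1 : Integrable (fun d => cycIntegrand r (m+1) hr d) (nuA r m) := by
    refine (integrable_const (1:ℝ)).mono' hcycmeas.aestronglyMeasurable ?_
    refine hae.mono fun d hd => ?_
    have h := hcycbound d hd
    rw [Real.norm_eq_abs, abs_le]
    exact ⟨by linarith [h.1], h.2⟩
  have hint2 : Integrable (fun d => ∫ u, K (d, u) ∂(muB r m)) (nuA r m) :=
    hKint.integral_prod_left
  have hmain : ∀ᵐ d ∂(nuA r m),
      cycIntegrand r (m+1) hr d ≤ ∫ u, K (d, u) ∂(muB r m) :=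
    hae.mono fun d hd => key_lemma r m hr d hd
  calc (∫ d, cycIntegrand r (m+1) hr d ∂(nuA r m))
      ≤ ∫ d, ∫ u, K (d, u) ∂(muB r m) ∂(nuA r m) := integral_mono_ae hint1 hint2 hmain
    _ = ∫ p, K p ∂((nuA r m).prod (muB r m)) := (integral_prod K hKint).symm
    _ = ∫ ω, Hfun r (m+1) ω ∂(cycMeasure r (m+1)) := by
        rw [← (mpPsi r m).integral_comp (Psi r m).measurableEmbedding K]
        refine integral_congr_ae (ae_of_all _ fun ω => ?_)
        simp [hK]
    _ = (cycMeasure r (m+1) {ω | diagStable r (m+1) hr ω}).toReal := by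
        rw [Hfun_eq_indicator hr, integral_indicator_one (measurableSet_stable hr), measureReal_def]

end CycAux

/-- For all `r ≥ 2` and `n ≥ 2`,
`P(E_n) ≥ ∫_{([0,1]^n)^r} ∏ (1 − x^{(1)}_{i_1} ⋯ x^{(r)}_{i_r}) dx^{(1)} ⋯ dx^{(r)}`. -/
theorem diag_cyclic_stability_probability_lower_bound (r n : ℕ) (hr : 2 ≤ r) (hn : 2 ≤ n) :
    (∫ x : Fin r → Fin n → ℝ, cycIntegrand r n (by omega) x
        ∂(Measure.pi fun _ : Fin r => Measure.pi fun _ : Fin n =>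
            volume.restrict (Icc (0:ℝ) 1))) ≤
      (cycMeasure r n {ω | diagStable r n (by omega) ω}).toReal := by
  obtain ⟨m, rfl⟩ : ∃ m, n = m + 1 := ⟨n - 1, by omega⟩
  exact CycAux.aux_main r m (by omega)
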